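/- For vectors x, y ∈ ℝ^n such that there is an index k with y↓_i = x↓_i for i = 1,…,k−1 and y↓_k ≥ x↓_k + ε for some ε > 0, the function Φ(z) = ∑_{i=1}^n (2n)^{z_i/ε} satisfies Φ(y) − Φ(x) ≥ (1/2)·(2n)^{y↓_k/ε} > 0. -/

import Mathlib

open Finset

/-- The decreasing rearrangement of a vector in `ℝ^n`. -/
noncomputable def dRe {n : ℕ} (x : Fin n → ℝ) : Fin n → ℝ :=
  fun i => (x ∘ Tuple.sort x) i.rev

lemma dRe_antitone {n : ℕ} (x : Fin n → ℝ) : Antitone (dRe x) := by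
  intro i j hij
  exact Tuple.monotone_sort x (Fin.rev_le_rev.mpr hij)

lemma sum_dRe {n : ℕ} (x : Fin n → ℝ) (f : ℝ → ℝ) :
    ∑ i, f (dRe x i) = ∑ i, f (x i) := by
  rw [← Equiv.sum_comp ((Fin.revPerm.trans (Tuple.sort x)) : Equiv.Perm (Fin n))
    (fun i => f (x i))]
  rfl

/-- if the decreasing rearrangements of `y` and `x` agree before
index `k` and `y↓_k ≥ x↓_k + ε`, then `Φ(y) − Φ(x) ≥ (1/2)·(2n)^(y↓_k/ε) > 0`
for `Φ(z) = ∑ i, (2n)^(z_i/ε)`. -/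
theorem stmt_7 {n : ℕ} (hn : 0 < n)
    (x y : Fin n → ℝ) (ε : ℝ) (hε : 0 < ε) (k : Fin n)
    (hpre : ∀ i : Fin n, i < k → dRe y i = dRe x i)
    (hk : dRe x k + ε ≤ dRe y k) :
    (1 / 2) * (2 * n : ℝ) ^ (dRe y k / ε) ≤
      (∑ i, (2 * n : ℝ) ^ (y i / ε)) - ∑ i, (2 * n : ℝ) ^ (x i / ε) ∧
    0 < (1 / 2) * (2 * n : ℝ) ^ (dRe y k / ε) := by
  have hb : (1 : ℝ) < 2 * n := by
    have : (1 : ℝ) ≤ (n : ℝ) := by exact_mod_cast hn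
    nlinarith
  have hb0 : (0 : ℝ) < 2 * n := by linarith
  set g : ℝ → ℝ := fun t => (2 * n : ℝ) ^ (t / ε) with hg
  have hgpos : ∀ t, 0 < g t := fun t => Real.rpow_pos_of_pos hb0 _
  set C : ℝ := g (dRe y k) with hC
  have hCpos : 0 < C := hgpos _
  refine ⟨?_, by positivity⟩
  rw [← sum_dRe y g, ← sum_dRe x g]
  have hsplit : (∑ i, g (dRe y i)) - ∑ i, g (dRe x i)
      = ∑ i ∈ univ.filter (fun i => ¬ i < k), (g (dRe y i) - g (dRe x i)) := by
    rw [← Finset.sum_sub_distrib,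
      ← Finset.sum_filter_add_sum_filter_not univ (fun i => i < k)
        (fun i => g (dRe y i) - g (dRe x i))]
    have : ∑ i ∈ univ.filter (fun i => i < k), (g (dRe y i) - g (dRe x i)) = 0 := by
      apply Finset.sum_eq_zero
      intro i hi
      rw [hpre i (Finset.mem_filter.mp hi).2]
      ring
    rw [this, zero_add]
  rw [hsplit, Finset.sum_sub_distrib]
  set S := univ.filter (fun i : Fin n => ¬ i < k) with hS
  have hkS : k ∈ S := by simp [hS]
  -- lower bound for y-sum
  have h1 : C ≤ ∑ i ∈ S, g (dRe y i) :=
    Finset.single_le_sum (fun i _ => (hgpos _).le) hkS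
  -- upper bound on g (dRe x i) for i ∈ S
  have hak : g (dRe x k) ≤ C / (2 * n) := by
    have h2 : dRe x k / ε ≤ dRe y k / ε - 1 := by
      rw [le_sub_iff_add_le, show (1:ℝ) = ε / ε from (div_self hε.ne').symm,
        ← add_div]
      gcongr
    calc g (dRe x k) ≤ (2 * n : ℝ) ^ (dRe y k / ε - 1) :=
          Real.rpow_le_rpow_of_exponent_le hb.le h2
      _ = C / (2 * n) := by
          rw [Real.rpow_sub hb0, Real.rpow_one]
  have h2 : ∑ i ∈ S, g (dRe x i) ≤ C / 2 := by
    calc ∑ i ∈ S, g (dRe x i) ≤ ∑ _i ∈ S, C / (2 * n) := by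
          apply Finset.sum_le_sum
          intro i hi
          have hki : k ≤ i := le_of_not_gt (by simpa [hS] using hi)
          calc g (dRe x i) ≤ g (dRe x k) := by
                apply Real.rpow_le_rpow_of_exponent_le hb.le
                gcongr
                exact dRe_antitone x hki
            _ ≤ C / (2 * n) := hak
      _ = S.card * (C / (2 * n)) := by rw [Finset.sum_const, nsmul_eq_mul]
      _ ≤ n * (C / (2 * n)) := by
          apply mul_le_mul_of_nonneg_right _ (by positivity)
          exact_mod_cast (Finset.card_le_card (Finset.subset_univ S)).trans
            (le_of_eq (Finset.card_univ.trans (Fintype.card_fin n)))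
      _ = C / 2 := by field_simp
  linarith
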